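/- Let E be the Banach algebra of continuous ℂ-linear endomorphisms of the space of n×n complex matrices, let 𝓛 : ℝ → E be continuous, λ ∈ ℝ, t_0 ∈ ℝ. Define D_0(t) := 1 and recursively D_k(t) := ∫_{t_0}^{t} 𝓛(s)∘D_{k−1}(s) ds for k ≥ 1 (equivalently, D_k(t) is the time-ordered iterated integral ∫_{t_0}^{t} dt_1 ⋯ ∫_{t_0}^{t_{k−1}} dt_k 𝓛(t_1)∘⋯∘𝓛(t_k)). Then for every t the series Σ_{k=0}^{∞} λ^k D_k(t) is summable in E, and U(t) := Σ_{k=0}^{∞} λ^k D_k(t) satisfies U(t_0) = 1 and, for every t, U has derivative λ·𝓛(t)∘U(t) at t. -/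

import Mathlib

open MeasureTheory

attribute [local instance] Matrix.linftyOpNormedAddCommGroup Matrix.linftyOpNormedSpace

noncomputable instance stmt6CLMNormedAddCommGroup (n : ℕ) :
    NormedAddCommGroup (Matrix (Fin n) (Fin n) ℂ →L[ℂ] Matrix (Fin n) (Fin n) ℂ) :=
  ContinuousLinearMap.toNormedAddCommGroup

noncomputable instance stmt6CLMNormedSpace (n : ℕ) :
    NormedSpace ℂ (Matrix (Fin n) (Fin n) ℂ →L[ℂ] Matrix (Fin n) (Fin n) ℂ) :=
  ContinuousLinearMap.toNormedSpace

noncomputable instance stmt6CLMNormedSpaceReal (n : ℕ) :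
    NormedSpace ℝ (Matrix (Fin n) (Fin n) ℂ →L[ℂ] Matrix (Fin n) (Fin n) ℂ) :=
  ContinuousLinearMap.toNormedSpace

instance stmt6CLMContinuousSMulReal (n : ℕ) :
    ContinuousSMul ℝ (Matrix (Fin n) (Fin n) ℂ →L[ℂ] Matrix (Fin n) (Fin n) ℂ) :=
  @IsBoundedSMul.continuousSMul _ _ _ _ _ _ _
    (NormedSpace.toIsBoundedSMul (E := (Matrix (Fin n) (Fin n) ℂ →L[ℂ] Matrix (Fin n) (Fin n) ℂ)))

noncomputable def stmt6NR (n : ℕ) :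
    NormedRing (Matrix (Fin n) (Fin n) ℂ →L[ℂ] Matrix (Fin n) (Fin n) ℂ) :=
  ContinuousLinearMap.toNormedRing

theorem stmt6TR (n : ℕ) :
    IsTopologicalRing (Matrix (Fin n) (Fin n) ℂ →L[ℂ] Matrix (Fin n) (Fin n) ℂ) :=
  @NonUnitalSeminormedRing.toIsTopologicalRing _ (stmt6NR n).toNonUnitalNormedRing.toNonUnitalSeminormedRing

theorem stmt6SS (n : ℕ) : SequentialSpace (Matrix (Fin n) (Fin n) ℂ) :=
  inferInstanceAs (SequentialSpace (Fin n → Fin n → ℂ))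

set_option maxHeartbeats 1000000
set_option synthInstance.maxHeartbeats 1000000

/-- the Dyson series.  With `D_0(t) = 1` and
`D_k(t) = ∫_{t_0}^t 𝓛(s) D_{k-1}(s) ds`, the series `Σ_k λ^k D_k(t)` is summable and
`U(t) = Σ_k λ^k D_k(t)` satisfies `U(t_0) = 1` and `U' = λ 𝓛(t) U(t)`. -/
theorem stmt6 (n : ℕ)
    (𝓛 : ℝ → (Matrix (Fin n) (Fin n) ℂ →L[ℂ] Matrix (Fin n) (Fin n) ℂ))
    (hcont : Continuous 𝓛) (lam : ℝ) (t₀ : ℝ)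
    (D : ℕ → ℝ → (Matrix (Fin n) (Fin n) ℂ →L[ℂ] Matrix (Fin n) (Fin n) ℂ))
    (hD0 : ∀ t, D 0 t = 1)
    (hDk : ∀ k t, D (k + 1) t = ∫ s in t₀..t, 𝓛 s * D k s) :
    (∀ t, Summable (fun k : ℕ => lam ^ k • D k t)) ∧
      (∑' k : ℕ, lam ^ k • D k t₀) = 1 ∧
      ∀ t, HasDerivAt (fun u => ∑' k : ℕ, lam ^ k • D k u)
        (lam • (𝓛 t * ∑' k : ℕ, lam ^ k • D k t)) t := by
  haveI := stmt6TR n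
  haveI := stmt6SS n
  haveI : @CompleteSpace (Matrix (Fin n) (Fin n) ℂ →L[ℂ] Matrix (Fin n) (Fin n) ℂ) (stmt6CLMNormedAddCommGroup n).toUniformSpace :=
    ContinuousLinearMap.instCompleteSpace
  haveI : @TopologicalSpace.PseudoMetrizableSpace (Matrix (Fin n) (Fin n) ℂ →L[ℂ] Matrix (Fin n) (Fin n) ℂ)
      (stmt6CLMNormedAddCommGroup n).toUniformSpace.toTopologicalSpace :=
    @UniformSpace.pseudoMetrizableSpace _ (stmt6CLMNormedAddCommGroup n).toUniformSpace _
  haveI : TopologicalSpace.PseudoMetrizableSpace (Matrix (Fin n) (Fin n) ℂ →L[ℂ] Matrix (Fin n) (Fin n) ℂ) :=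
    @UniformSpace.pseudoMetrizableSpace _ (stmt6CLMNormedAddCommGroup n).toUniformSpace _
  letI := (stmt6CLMNormedSpaceReal n).toModule.toDistribMulAction
  haveI : @SMulCommClass ℝ ℝ (Matrix (Fin n) (Fin n) ℂ →L[ℂ] Matrix (Fin n) (Fin n) ℂ)
      (stmt6CLMNormedSpaceReal n).toModule.toDistribMulAction.toMulAction.toSMul
      (stmt6CLMNormedSpaceReal n).toModule.toDistribMulAction.toMulAction.toSMul :=
    ⟨fun a b x => (smul_smul a b x).trans
      ((congrArg (fun c : ℝ => c • x) (mul_comm a b)).trans (smul_smul b a x).symm)⟩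
  haveI : @ContinuousConstSMul ℝ (Matrix (Fin n) (Fin n) ℂ →L[ℂ] Matrix (Fin n) (Fin n) ℂ)
      (stmt6CLMNormedAddCommGroup n).toUniformSpace.toTopologicalSpace
      (stmt6CLMNormedSpaceReal n).toModule.toDistribMulAction.toMulAction.toSMul :=
    ⟨fun c => (stmt6CLMContinuousSMulReal n).continuous_smul.comp
      (continuous_const.prodMk continuous_id)⟩
  -- continuity and differentiability of each `D k`
  have hDcont : ∀ k, Continuous (D k) := by
    intro k
    induction k with
    | zero =>
      have : D 0 = fun _ => 1 := funext hD0
      rw [this]; exact continuous_const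
    | succ k ih =>
      have hg : Continuous fun s => 𝓛 s * D k s := hcont.mul ih
      have hEq : D (k + 1) = fun t => ∫ s in t₀..t, 𝓛 s * D k s := funext (hDk k)
      rw [hEq]
      refine continuous_iff_continuousAt.2 fun x => ?_
      exact (intervalIntegral.integral_hasDerivAt_right (hg.intervalIntegrable t₀ x)
        (hg.stronglyMeasurableAtFilter _ _) hg.continuousAt).continuousAt
  have hDderiv : ∀ k x, HasDerivAt (D (k + 1)) (𝓛 x * D k x) x := by
    intro k x
    have hg : Continuous fun s => 𝓛 s * D k s := hcont.mul (hDcont k)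
    have hEq : D (k + 1) = fun t => ∫ s in t₀..t, 𝓛 s * D k s := funext (hDk k)
    rw [hEq]
    exact intervalIntegral.integral_hasDerivAt_right (hg.intervalIntegrable t₀ x)
      (hg.stronglyMeasurableAtFilter _ _) hg.continuousAt
  -- the abs-integral computation
  have habs : ∀ (k : ℕ) (x : ℝ), |∫ s in t₀..x, |s - t₀| ^ k| = |x - t₀| ^ (k + 1) / (k + 1) := by
    intro k x
    rcases le_total t₀ x with h | h
    · have h1 : (∫ s in t₀..x, |s - t₀| ^ k) = ∫ s in t₀..x, (s - t₀) ^ k := by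
        apply intervalIntegral.integral_congr
        intro s hs
        rw [Set.uIcc_of_le h] at hs
        show |s - t₀| ^ k = (s - t₀) ^ k
        rw [abs_of_nonneg (by linarith [hs.1])]
      have h2 : (∫ s in t₀..x, (s - t₀) ^ k) = (x - t₀) ^ (k + 1) / (k + 1) := by
        rw [show (fun s => (s - t₀) ^ k) = fun s => (fun u => u ^ k) (s - t₀) from rfl]
        rw [intervalIntegral.integral_comp_sub_right (fun u => u ^ k) t₀]
        simp [integral_pow]
      rw [h1, h2, abs_div, abs_pow, abs_of_nonneg (sub_nonneg.2 h),
        abs_of_pos (by positivity : (0:ℝ) < (k:ℝ) + 1)]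
    · have h1 : (∫ s in t₀..x, |s - t₀| ^ k) = -∫ s in x..t₀, (t₀ - s) ^ k := by
        rw [intervalIntegral.integral_symm]
        congr 1
        apply intervalIntegral.integral_congr
        intro s hs
        rw [Set.uIcc_of_le h] at hs
        show |s - t₀| ^ k = (t₀ - s) ^ k
        rw [abs_of_nonpos (by linarith [hs.2]), neg_sub]
      have h2 : (∫ s in x..t₀, (t₀ - s) ^ k) = (t₀ - x) ^ (k + 1) / (k + 1) := by
        rw [show (fun s => (t₀ - s) ^ k) = fun s => (fun u => u ^ k) (t₀ - s) from rfl]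
        rw [intervalIntegral.integral_comp_sub_left (fun u => u ^ k) t₀]
        simp [integral_pow]
      rw [h1, h2, abs_neg, abs_div, abs_pow, abs_of_nonneg (by linarith : (0:ℝ) ≤ t₀ - x),
        abs_of_pos (by positivity : (0:ℝ) < (k:ℝ) + 1), abs_sub_comm,
        abs_of_nonneg (show (0:ℝ) ≤ t₀ - x by linarith)]
  -- the key factorial bound
  have key : ∀ (a b M : ℝ), t₀ ∈ Set.Icc a b → (∀ s ∈ Set.Icc a b, ‖𝓛 s‖ ≤ M) →
      ∀ k, ∀ x ∈ Set.Icc a b, ‖D k x‖ ≤ M ^ k * |x - t₀| ^ k / (Nat.factorial k) := by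
    intro a b M ht₀ hM
    have hM0 : 0 ≤ M := le_trans (norm_nonneg _) (hM t₀ ht₀)
    intro k
    induction k with
    | zero =>
      intro x _
      rw [hD0]
      exact (ContinuousLinearMap.norm_id_le (𝕜 := ℂ) (E := Matrix (Fin n) (Fin n) ℂ)).trans (by simp)
    | succ k ih =>
      intro x hx
      rw [hDk]
      have hb : IntervalIntegrable (fun s => (M ^ (k + 1) / Nat.factorial k) * |s - t₀| ^ k)
          volume t₀ x := by
        apply Continuous.intervalIntegrable
        fun_prop
      have hle : ‖∫ s in t₀..x, 𝓛 s * D k s‖ ≤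
          |∫ s in t₀..x, (M ^ (k + 1) / Nat.factorial k) * |s - t₀| ^ k| := by
        apply intervalIntegral.norm_integral_le_abs_of_norm_le _ hb
        refine (ae_restrict_iff' measurableSet_uIoc).2 (ae_of_all _ fun s hs => ?_)
        have hs' : s ∈ Set.Icc a b :=
          Set.uIcc_subset_Icc ht₀ hx (Set.uIoc_subset_uIcc hs)
        calc ‖𝓛 s * D k s‖ ≤ ‖𝓛 s‖ * ‖D k s‖ := ContinuousLinearMap.opNorm_comp_le _ _
          _ ≤ M * (M ^ k * |s - t₀| ^ k / Nat.factorial k) := by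
              apply mul_le_mul (hM s hs') (ih s hs') (norm_nonneg _) hM0
          _ = (M ^ (k + 1) / Nat.factorial k) * |s - t₀| ^ k := by
              rw [pow_succ]; ring
      rw [intervalIntegral.integral_const_mul, abs_mul,
        abs_of_nonneg (by positivity : (0:ℝ) ≤ M ^ (k + 1) / Nat.factorial k), habs k x] at hle
      refine hle.trans (le_of_eq ?_)
      rw [Nat.factorial_succ, div_mul_div_comm]
      push_cast
      rw [mul_comm ((Nat.factorial k : ℝ)) ((k : ℝ) + 1)]
  -- summability
  have hsum : ∀ t, Summable (fun k : ℕ => lam ^ k • D k t) := by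
    intro t
    obtain ⟨M, hM⟩ := (isCompact_Icc (a := min t₀ t) (b := max t₀ t)).exists_bound_of_continuousOn
      hcont.continuousOn
    have ht₀ : t₀ ∈ Set.Icc (min t₀ t) (max t₀ t) := ⟨min_le_left _ _, le_max_left _ _⟩
    have ht : t ∈ Set.Icc (min t₀ t) (max t₀ t) := ⟨min_le_right _ _, le_max_right _ _⟩
    have hM0 : 0 ≤ M := le_trans (norm_nonneg _) (hM t₀ ht₀)
    refine Summable.of_norm_bounded
      (g := fun k => (|lam| * M * |t - t₀|) ^ k / Nat.factorial k)
      (Real.summable_pow_div_factorial _) fun k => ?_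
    calc ‖lam ^ k • D k t‖ ≤ ‖lam ^ k‖ * ‖D k t‖ := ContinuousLinearMap.opNorm_smul_le _ _
      _ = |lam| ^ k * ‖D k t‖ := by rw [Real.norm_eq_abs, abs_pow]
      _ ≤ |lam| ^ k * (M ^ k * |t - t₀| ^ k / Nat.factorial k) := by
          apply mul_le_mul_of_nonneg_left (key _ _ M ht₀ hM k t ht) (by positivity)
      _ = (|lam| * M * |t - t₀|) ^ k / Nat.factorial k := by rw [mul_pow, mul_pow]; ring
  refine ⟨hsum, ?_, ?_⟩
  · rw [Summable.tsum_eq_zero_add (hsum t₀)]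
    have h1 : ∀ k : ℕ, lam ^ (k + 1) • D (k + 1) t₀ = (0 : Matrix (Fin n) (Fin n) ℂ →L[ℂ]
        Matrix (Fin n) (Fin n) ℂ) := by
      intro k; rw [hDk, intervalIntegral.integral_same]; ext x; simp; exact Or.inr rfl
    rw [tsum_congr h1, tsum_zero, add_zero, pow_zero, hD0, one_smul]
  · intro t
    set R := |t - t₀| + 1 with hRdef
    have hR0 : (0:ℝ) < R := by positivity
    obtain ⟨M, hM⟩ := (isCompact_Icc (a := t₀ - R) (b := t₀ + R)).exists_bound_of_continuousOn
      hcont.continuousOn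
    have ht₀I : t₀ ∈ Set.Icc (t₀ - R) (t₀ + R) := by constructor <;> linarith
    have hM0 : 0 ≤ M := le_trans (norm_nonneg _) (hM t₀ ht₀I)
    have ht₀s : t₀ ∈ Set.Ioo (t₀ - R) (t₀ + R) := by constructor <;> linarith
    have hts : t ∈ Set.Ioo (t₀ - R) (t₀ + R) := by
      have h1 : |t - t₀| < R := by rw [hRdef]; linarith
      rw [abs_lt] at h1
      constructor <;> linarith [h1.1, h1.2]
    set g' : ℕ → ℝ → (Matrix (Fin n) (Fin n) ℂ →L[ℂ] Matrix (Fin n) (Fin n) ℂ) :=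
      fun k x => Nat.rec 0 (fun k _ => lam ^ (k + 1) • (𝓛 x * D k x)) k with hg'def
    set u : ℕ → ℝ := fun k => Nat.rec 0 (fun k _ => (|lam| * M) ^ (k + 1) * R ^ k / Nat.factorial k) k
      with hudef
    have hu : Summable u := by
      apply (summable_nat_add_iff 1).mp
      apply Summable.congr ((Real.summable_pow_div_factorial (|lam| * M * R)).mul_left (|lam| * M))
      intro k
      show |lam| * M * ((|lam| * M * R) ^ k / Nat.factorial k)
        = (|lam| * M) ^ (k + 1) * R ^ k / Nat.factorial k
      rw [pow_succ, mul_pow]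
      ring
    have hg : ∀ k y, y ∈ Set.Ioo (t₀ - R) (t₀ + R) →
        HasDerivAt (fun z => lam ^ k • D k z) (g' k y) y := by
      intro k y _
      cases k with
      | zero =>
        have : (fun z => lam ^ 0 • D 0 z) = fun _ => (1 : Matrix (Fin n) (Fin n) ℂ →L[ℂ]
            Matrix (Fin n) (Fin n) ℂ) := by
          funext z; rw [hD0]; simp
        rw [this]
        exact hasDerivAt_const _ _
      | succ k =>
        exact (hDderiv k y).const_smul (lam ^ (k + 1))
    have hg' : ∀ k y, y ∈ Set.Ioo (t₀ - R) (t₀ + R) → ‖g' k y‖ ≤ u k := by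
      intro k y hy
      cases k with
      | zero => simp [hg'def, hudef]
      | succ k =>
        have hyI : y ∈ Set.Icc (t₀ - R) (t₀ + R) := Set.Ioo_subset_Icc_self hy
        have hyR : |y - t₀| ≤ R := by
          rw [abs_le]; constructor <;> [linarith [hyI.1]; linarith [hyI.2]]
        show ‖lam ^ (k + 1) • (𝓛 y * D k y)‖ ≤ (|lam| * M) ^ (k + 1) * R ^ k / Nat.factorial k
        calc ‖lam ^ (k + 1) • (𝓛 y * D k y)‖ ≤ ‖lam ^ (k + 1)‖ * ‖𝓛 y * D k y‖ := ContinuousLinearMap.opNorm_smul_le _ _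
          _ = |lam| ^ (k + 1) * ‖𝓛 y * D k y‖ := by rw [Real.norm_eq_abs, abs_pow]
          _ ≤ |lam| ^ (k + 1) * (‖𝓛 y‖ * ‖D k y‖) := by
              apply mul_le_mul_of_nonneg_left (ContinuousLinearMap.opNorm_comp_le _ _) (by positivity)
          _ ≤ |lam| ^ (k + 1) * (M * (M ^ k * |y - t₀| ^ k / Nat.factorial k)) := by
              apply mul_le_mul_of_nonneg_left _ (by positivity)
              exact mul_le_mul (hM y hyI) (key _ _ M ht₀I hM k y hyI) (norm_nonneg _) hM0
          _ ≤ |lam| ^ (k + 1) * (M * (M ^ k * R ^ k / Nat.factorial k)) := by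
              apply mul_le_mul_of_nonneg_left _ (by positivity)
              apply mul_le_mul_of_nonneg_left _ hM0
              apply div_le_div_of_nonneg_right _ _ |>.trans_eq rfl
              · exact mul_le_mul_of_nonneg_left (pow_le_pow_left₀ (abs_nonneg _) hyR k)
                  (by positivity)
              · positivity
          _ = (|lam| * M) ^ (k + 1) * R ^ k / Nat.factorial k := by
              rw [mul_pow, pow_succ]; ring
    have hder := hasDerivAt_tsum_of_isPreconnected hu isOpen_Ioo isPreconnected_Ioo
      hg hg' ht₀s (hsum t₀) hts
    have hsumg' : Summable (fun k => g' k t) :=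
      Summable.of_norm_bounded (g := u) hu fun k => hg' k t hts
    have heq : (∑' k : ℕ, g' k t) = lam • (𝓛 t * ∑' k : ℕ, lam ^ k • D k t) := by
      rw [Summable.tsum_eq_zero_add hsumg']
      show (0 : Matrix (Fin n) (Fin n) ℂ →L[ℂ] Matrix (Fin n) (Fin n) ℂ)
        + (∑' k : ℕ, lam ^ (k + 1) • (𝓛 t * D k t)) = _
      rw [zero_add]
      have hterm : ∀ k : ℕ, lam ^ (k + 1) • (𝓛 t * D k t)
          = lam • (𝓛 t * (lam ^ k • D k t)) := by
        intro k
        ext x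
        simp [ContinuousLinearMap.mul_apply, _root_.map_smul, smul_smul, pow_succ']
        ring
      rw [tsum_congr hterm]
      calc (∑' k : ℕ, lam • (𝓛 t * (lam ^ k • D k t)))
          = lam • ∑' k : ℕ, 𝓛 t * (lam ^ k • D k t) :=
            Summable.tsum_const_smul lam ((hsum t).mul_left (𝓛 t))
        _ = lam • (𝓛 t * ∑' k : ℕ, lam ^ k • D k t) :=
            congrArg (fun X => lam • X) (Summable.tsum_mul_left (𝓛 t) (hsum t))
    exact hder.congr_deriv heq
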